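/- Let γ ∈ [0,1) and let f : [1,∞) → (0,1] be non-increasing, regularly varying at infinity with index -γ, with f(t) → 0 when γ = 0. Define F(r) = ∑_{1 ≤ s ≤ r} f(s) and F^{-1}(r) = inf{s : F(s) ≥ r}. Then for all sufficiently large s, s^{1/(1 - γ/2)} ≤ F^{-1}(s). -/

import Mathlib

open Filter Real

lemma one_le_two_pow_real (n : ℕ) : (1:ℝ) ≤ 2 ^ n := by
  induction n with
  | zero => norm_num
  | succ n ih => rw [pow_succ]; nlinarith

lemma bern_step {β x : ℝ} (hβ0 : 0 ≤ β) (hβ1 : β < 1) (hx : 1 ≤ x) :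
    (x - 1) ^ (1 - β) ≤ x ^ (1 - β) - (1 - β) * x ^ (-β) := by
  have hx0 : (0:ℝ) < x := by linarith
  have hinv : 1 / x ≤ 1 := by rw [div_le_one hx0]; exact hx
  have hinv0 : 0 < 1 / x := by positivity
  have hb : (1 + -(1/x)) ^ (1 - β) ≤ 1 + (1 - β) * -(1/x) :=
    rpow_one_add_le_one_add_mul_self (by linarith) (by linarith) (by linarith)
  have hfac : x - 1 = x * (1 + -(1/x)) := by
    have h : x * (1/x) = 1 := by field_simp
    nlinarith [h]
  have h1x : (0:ℝ) ≤ 1 + -(1/x) := by linarith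
  have hxp : (0:ℝ) ≤ x ^ (1 - β) := Real.rpow_nonneg hx0.le _
  have hdiv : x ^ (1 - β) / x = x ^ (-β) := by
    have h := Real.rpow_sub_one hx0.ne' (1 - β)
    have he : (1 - β) - 1 = -β := by ring
    rw [he] at h
    exact h.symm
  calc (x - 1) ^ (1 - β) = x ^ (1 - β) * (1 + -(1/x)) ^ (1 - β) := by
        rw [hfac, Real.mul_rpow hx0.le h1x]
    _ ≤ x ^ (1 - β) * (1 + (1 - β) * -(1/x)) := mul_le_mul_of_nonneg_left hb hxp
    _ = x ^ (1 - β) - (1 - β) * (x ^ (1 - β) / x) := by ring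
    _ = x ^ (1 - β) - (1 - β) * x ^ (-β) := by rw [hdiv]

lemma aux_sum_rpow (β : ℝ) (hβ0 : 0 ≤ β) (hβ1 : β < 1) (n : ℕ) :
    ∑ k ∈ Finset.Icc 1 n, (k:ℝ) ^ (-β) ≤ (n:ℝ) ^ (1 - β) / (1 - β) := by
  have hp0 : (0:ℝ) < 1 - β := by linarith
  induction n with
  | zero => simp [Real.zero_rpow hp0.ne']
  | succ n ih =>
    rw [Finset.sum_Icc_succ_top (by omega : 1 ≤ n + 1)]
    have hx : (1:ℝ) ≤ (n:ℝ) + 1 := by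
      have : (0:ℝ) ≤ (n:ℝ) := Nat.cast_nonneg n
      linarith
    have hb := bern_step hβ0 hβ1 hx
    have h1 : ((n:ℝ) + 1) - 1 = (n:ℝ) := by ring
    rw [h1] at hb
    have hcast : ((n + 1 : ℕ) : ℝ) = (n:ℝ) + 1 := by push_cast; ring
    rw [hcast]
    have key : (n:ℝ) ^ (1 - β) + (1 - β) * ((n:ℝ) + 1) ^ (-β) ≤ ((n:ℝ) + 1) ^ (1 - β) := by
      linarith
    have hfin : (n:ℝ) ^ (1 - β) / (1 - β) + ((n:ℝ) + 1) ^ (-β)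
        ≤ ((n:ℝ) + 1) ^ (1 - β) / (1 - β) := by
      rw [div_add' _ _ _ hp0.ne', div_le_div_iff₀ hp0 hp0]
      nlinarith [key]
    linarith

set_option maxHeartbeats 1000000 in
theorem stmt_8 (γ : ℝ) (hγ0 : 0 ≤ γ) (hγ1 : γ < 1) (f : ℝ → ℝ)
    (hpos : ∀ t : ℝ, 1 ≤ t → 0 < f t ∧ f t ≤ 1)
    (hmono : ∀ x y : ℝ, 1 ≤ x → x ≤ y → f y ≤ f x)
    (hrv : ∀ a : ℝ, 0 < a →
      Filter.Tendsto (fun t : ℝ => f (a * t) / f t) Filter.atTop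
        (nhds (a ^ (-γ))))
    (hlim : γ = 0 → Filter.Tendsto f Filter.atTop (nhds 0))
    (F Finv : ℝ → ℝ)
    (hF : ∀ r, F r = ∑ s ∈ Finset.Icc 1 ⌊r⌋₊, f s)
    (hFinv : ∀ r, Finv r = sInf {s : ℝ | r ≤ F s}) :
    ∀ᶠ s : ℝ in Filter.atTop, s ^ (1 / (1 - γ / 2)) ≤ Finv s := by
  have hp0 : (0:ℝ) < 1 - γ / 2 := by linarith
  -- F is monotone
  have hFmono : ∀ x y : ℝ, x ≤ y → F x ≤ F y := by
    intro x y hxy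
    rw [hF, hF]
    apply Finset.sum_le_sum_of_subset_of_nonneg
    · exact Finset.Icc_subset_Icc le_rfl (Nat.floor_mono hxy)
    · intro k hk _
      have hk1 : 1 ≤ k := (Finset.mem_Icc.mp hk).1
      exact (hpos k (by exact_mod_cast hk1)).1.le
  -- Step C : F is unbounded
  have hub : ∀ s : ℝ, ∃ x : ℝ, s ≤ F x := by
    intro s
    have hq : γ < (1 + γ) / 2 := by linarith
    set c : ℝ := 2 ^ (-((1 + γ) / 2)) with hcdef
    have hc0 : (0:ℝ) < c := Real.rpow_pos_of_pos two_pos _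
    have hc1 : c < 1 := Real.rpow_lt_one_of_one_lt_of_neg one_lt_two (by linarith)
    have hclt : c < 2 ^ (-γ) :=
      Real.rpow_lt_rpow_of_exponent_lt one_lt_two (by linarith)
    obtain ⟨T₀, hT₀⟩ := Filter.eventually_atTop.mp
      (((hrv 2 two_pos).eventually_const_lt hclt).and (eventually_ge_atTop (1:ℝ)))
    set T : ℝ := max T₀ 1 with hTdef
    have hT1 : (1:ℝ) ≤ T := le_max_right _ _
    have hT0' : (0:ℝ) < T := by linarith
    have hfT : 0 < f T := (hpos T hT1).1
    have hstep : ∀ t : ℝ, T ≤ t → c * f t ≤ f (2 * t) := by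
      intro t ht
      have h := (hT₀ t (le_trans (le_max_left _ _) ht)).1
      have hft : 0 < f t := (hpos t (le_trans hT1 ht)).1
      rw [lt_div_iff₀ hft] at h
      exact h.le
    have hdy : ∀ n : ℕ, c ^ n * f T ≤ f (2 ^ n * T) := by
      intro n
      induction n with
      | zero => simp
      | succ n ih =>
        have hTn : T ≤ 2 ^ n * T :=
          le_mul_of_one_le_left hT0'.le (one_le_two_pow_real n)
        calc c ^ (n+1) * f T = c * (c ^ n * f T) := by ring
          _ ≤ c * f (2 ^ n * T) := mul_le_mul_of_nonneg_left ih hc0.le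
          _ ≤ f (2 * (2 ^ n * T)) := hstep _ hTn
          _ = f (2 ^ (n+1) * T) := by rw [pow_succ]; congr 1; ring
    have h2c : (1:ℝ) < 2 * c := by
      have he : (2:ℝ) * c = 2 ^ (1 - (1 + γ) / 2) := by
        rw [show (1:ℝ) - (1 + γ) / 2 = 1 + -((1 + γ) / 2) by ring,
          Real.rpow_add two_pos, Real.rpow_one]
      rw [he]
      exact Real.one_lt_rpow_iff_of_pos two_pos |>.mpr (Or.inl ⟨one_lt_two, by linarith⟩)
    have t1 : Tendsto (fun m : ℕ => (2 * c) ^ m * T) atTop atTop :=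
      (tendsto_pow_atTop_atTop_of_one_lt h2c).atTop_mul_const hT0'
    have t2 : Tendsto (fun m : ℕ => (2 * c) ^ m * T - 1) atTop atTop := by
      simpa [sub_eq_add_neg] using tendsto_atTop_add_const_right atTop (-1 : ℝ) t1
    have t3 : Tendsto (fun m : ℕ => ((2 * c) ^ m * T - 1) * (c * f T)) atTop atTop :=
      t2.atTop_mul_const (mul_pos hc0 hfT)
    obtain ⟨m, hm⟩ := (t3.eventually_ge_atTop s).exists
    refine ⟨2 ^ (m+1) * T, ?_⟩
    set n1 : ℕ := ⌈(2:ℝ) ^ m * T⌉₊ with hn1def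
    set n2 : ℕ := ⌊(2:ℝ) ^ (m+1) * T⌋₊ with hn2def
    have hx1 : (1:ℝ) ≤ 2 ^ m * T := by
      nlinarith [one_le_two_pow_real m]
    have hmm : (2:ℝ) ^ (m+1) * T = 2 * (2 ^ m * T) := by rw [pow_succ]; ring
    have hn1u : (n1:ℝ) < 2 ^ m * T + 1 := Nat.ceil_lt_add_one (by linarith)
    have hn1l : (2:ℝ) ^ m * T ≤ n1 := Nat.le_ceil _
    have hn2l : (2:ℝ) ^ (m+1) * T - 1 < (n2:ℝ) := Nat.sub_one_lt_floor _
    have hn2u : (n2:ℝ) ≤ 2 ^ (m+1) * T := Nat.floor_le (by nlinarith)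
    have hn12 : n1 ≤ n2 + 1 := by
      have hr : (n1:ℝ) < (n2:ℝ) + 1 := by rw [hmm] at hn2l; linarith
      have h2 : n1 < n2 + 1 := by exact_mod_cast hr
      omega
    have h1n1 : 1 ≤ n1 := by
      have h0 : (0:ℝ) < (n1:ℝ) := by linarith
      exact_mod_cast Nat.cast_pos.mp h0
    rw [hF]
    have hterm : ∀ k ∈ Finset.Icc n1 n2, c ^ (m+1) * f T ≤ f k := by
      intro k hk
      obtain ⟨hk1, hk2⟩ := Finset.mem_Icc.mp hk
      have hk1' : (1:ℝ) ≤ (k:ℝ) := by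
        have : (n1:ℝ) ≤ k := by exact_mod_cast hk1
        linarith
      have hkle : (k:ℝ) ≤ 2 ^ (m+1) * T := by
        have : (k:ℝ) ≤ (n2:ℝ) := by exact_mod_cast hk2
        linarith
      exact le_trans (hdy (m+1)) (hmono _ _ hk1' hkle)
    have hcard : ((2:ℝ) ^ m * T - 1) ≤ ((Finset.Icc n1 n2).card : ℝ) := by
      rw [Nat.card_Icc, Nat.cast_sub hn12]
      push_cast
      rw [hmm] at hn2l
      linarith
    calc s ≤ ((2 * c) ^ m * T - 1) * (c * f T) := hm
      _ ≤ ((2:ℝ) ^ m * T - 1) * (c ^ (m+1) * f T) := by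
          have hcm0 : (0:ℝ) ≤ c ^ m := pow_nonneg hc0.le m
          have hcm1 : c ^ m ≤ 1 := pow_le_one₀ hc0.le hc1.le
          have e : ((2 * c) ^ m * T - 1) * (c * f T)
              = ((2:ℝ) ^ m * T * c ^ m - 1) * (c * f T) := by rw [mul_pow]; ring
          have e2 : ((2:ℝ) ^ m * T - 1) * (c ^ (m+1) * f T)
              = ((2:ℝ) ^ m * T * c ^ m - c ^ m) * (c * f T) := by ring
          rw [e, e2]
          have hle : (2:ℝ) ^ m * T * c ^ m - 1 ≤ 2 ^ m * T * c ^ m - c ^ m := by linarith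
          exact mul_le_mul_of_nonneg_right hle (mul_nonneg hc0.le hfT.le)
      _ ≤ ((Finset.Icc n1 n2).card : ℝ) * (c ^ (m+1) * f T) :=
          mul_le_mul_of_nonneg_right hcard (mul_nonneg (pow_nonneg hc0.le _) hfT.le)
      _ ≤ ∑ k ∈ Finset.Icc n1 n2, f k := by
          have h := Finset.card_nsmul_le_sum (Finset.Icc n1 n2)
            (fun k : ℕ => f k) (c ^ (m+1) * f T) hterm
          simpa [nsmul_eq_mul] using h
      _ ≤ ∑ k ∈ Finset.Icc 1 n2, f k := by
          apply Finset.sum_le_sum_of_subset_of_nonneg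
            (Finset.Icc_subset_Icc h1n1 le_rfl)
          intro k hk _
          have hk1 : 1 ≤ k := (Finset.mem_Icc.mp hk).1
          exact (hpos k (by exact_mod_cast hk1)).1.le
  -- Step A : f t * t^(γ/2) eventually small
  have hA : ∀ ε : ℝ, 0 < ε → ∃ T₁ : ℝ, 1 ≤ T₁ ∧ ∀ t : ℝ, T₁ ≤ t →
      f t * t ^ (γ / 2) ≤ ε := by
    intro ε hε
    rcases eq_or_lt_of_le hγ0 with hγz | hγpos
    · -- γ = 0
      obtain ⟨T₀, hT₀⟩ := Filter.eventually_atTop.mp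
        ((hlim hγz.symm).eventually_le_const hε)
      refine ⟨max T₀ 1, le_max_right _ _, ?_⟩
      intro t ht
      have hz : γ / 2 = 0 := by rw [← hγz]; norm_num
      rw [hz, Real.rpow_zero, mul_one]
      exact hT₀ t (le_trans (le_max_left _ _) ht)
    · -- 0 < γ
      set c₂ : ℝ := 2 ^ (-(3 * γ / 4)) with hc2def
      have hc20 : (0:ℝ) < c₂ := Real.rpow_pos_of_pos two_pos _
      have hlt : (2:ℝ) ^ (-γ) < c₂ :=
        Real.rpow_lt_rpow_of_exponent_lt one_lt_two (by linarith)
      obtain ⟨T₀, hT₀⟩ := Filter.eventually_atTop.mp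
        (((hrv 2 two_pos).eventually_lt_const hlt).and (eventually_ge_atTop (1:ℝ)))
      set T : ℝ := max T₀ 1 with hTdef
      have hT1 : (1:ℝ) ≤ T := le_max_right _ _
      have hT0' : (0:ℝ) < T := by linarith
      have hfT : 0 < f T := (hpos T hT1).1
      have hstep : ∀ t : ℝ, T ≤ t → f (2 * t) ≤ c₂ * f t := by
        intro t ht
        have h := (hT₀ t (le_trans (le_max_left _ _) ht)).1
        have hft : 0 < f t := (hpos t (le_trans hT1 ht)).1
        rw [div_lt_iff₀ hft] at h
        linarith
      have hdy2 : ∀ n : ℕ, f (2 ^ n * T) ≤ c₂ ^ n * f T := by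
        intro n
        induction n with
        | zero => simp
        | succ n ih =>
          have hTn : T ≤ 2 ^ n * T :=
            le_mul_of_one_le_left hT0'.le (one_le_two_pow_real n)
          calc f (2 ^ (n+1) * T) = f (2 * (2 ^ n * T)) := by
                rw [pow_succ]; congr 1; ring
            _ ≤ c₂ * f (2 ^ n * T) := hstep _ hTn
            _ ≤ c₂ * (c₂ ^ n * f T) := mul_le_mul_of_nonneg_left ih hc20.le
            _ = c₂ ^ (n+1) * f T := by ring
      set ρ : ℝ := c₂ * 2 ^ (γ / 2) with hρdef
      have hρ0 : (0:ℝ) < ρ := by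
        have := Real.rpow_pos_of_pos two_pos (γ / 2)
        positivity
      have hρ1 : ρ < 1 := by
        rw [hρdef, hc2def, ← Real.rpow_add two_pos]
        exact Real.rpow_lt_one_of_one_lt_of_neg one_lt_two (by linarith)
      set A : ℝ := f T * (2 * T) ^ (γ / 2) with hAdef
      have hA0 : (0:ℝ) < A := by
        rw [hAdef]
        exact mul_pos hfT (Real.rpow_pos_of_pos (by linarith) _)
      have htend : Tendsto (fun n : ℕ => A * ρ ^ n) atTop (nhds 0) := by
        have := (tendsto_pow_atTop_nhds_zero_of_lt_one hρ0.le hρ1).const_mul A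
        simpa using this
      obtain ⟨N, hN⟩ := Filter.eventually_atTop.mp (htend.eventually_le_const hε)
      have h2NT : (1:ℝ) ≤ 2 ^ N * T := by nlinarith [one_le_two_pow_real N]
      refine ⟨2 ^ N * T, h2NT, ?_⟩
      intro t ht
      have h1t : (1:ℝ) ≤ t := le_trans h2NT ht
      have hdivT : (1:ℝ) ≤ t / T := by
        rw [le_div_iff₀ hT0']
        nlinarith [one_le_two_pow_real N]
      obtain ⟨n, hn1, hn2⟩ := exists_nat_pow_near hdivT one_lt_two
      have htlow : 2 ^ n * T ≤ t := by
        rw [le_div_iff₀ hT0'] at hn1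
        linarith
      have hthigh : t < 2 ^ (n+1) * T := by
        rw [div_lt_iff₀ hT0'] at hn2
        linarith
      have hNle : N ≤ n := by
        by_contra hcon
        push_neg at hcon
        have hle : (2:ℝ) ^ (n+1) ≤ 2 ^ N := pow_le_pow_right₀ one_le_two (by omega)
        nlinarith
      have hfk : f t ≤ c₂ ^ n * f T := by
        have h1 : (1:ℝ) ≤ 2 ^ n * T := by nlinarith [one_le_two_pow_real n]
        exact le_trans (hmono _ _ h1 htlow) (hdy2 n)
      have htβ : t ^ (γ / 2) ≤ (2 * T) ^ (γ / 2) * ((2:ℝ) ^ (γ / 2)) ^ n := by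
        have h1 : t ^ (γ / 2) ≤ ((2:ℝ) ^ (n+1) * T) ^ (γ / 2) :=
          Real.rpow_le_rpow (by linarith) hthigh.le (by linarith)
        have h2 : ((2:ℝ) ^ (n+1) * T) ^ (γ / 2)
            = (2 * T) ^ (γ / 2) * ((2:ℝ) ^ (γ / 2)) ^ n := by
          rw [show (2:ℝ) ^ (n+1) * T = (2 * T) * 2 ^ n by rw [pow_succ]; ring,
            Real.mul_rpow (by linarith) (by positivity),
            ← Real.rpow_natCast (2:ℝ) n, ← Real.rpow_mul (by norm_num : (0:ℝ) ≤ 2),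
            mul_comm (n:ℝ) (γ / 2), Real.rpow_mul (by norm_num : (0:ℝ) ≤ 2),
            Real.rpow_natCast]
        rw [h2] at h1
        exact h1
      have hfnn : 0 ≤ f t := (hpos t h1t).1.le
      calc f t * t ^ (γ / 2)
          ≤ (c₂ ^ n * f T) * ((2 * T) ^ (γ / 2) * ((2:ℝ) ^ (γ / 2)) ^ n) := by
            apply mul_le_mul hfk htβ (Real.rpow_nonneg (by linarith) _)
              (mul_nonneg (pow_nonneg hc20.le _) hfT.le)
        _ = A * ρ ^ n := by rw [hAdef, hρdef, mul_pow]; ring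
        _ ≤ A * ρ ^ N :=
            mul_le_mul_of_nonneg_left (pow_le_pow_of_le_one hρ0.le hρ1.le hNle) hA0.le
        _ ≤ ε := hN N le_rfl
  -- Step B : eventually F R < R ^ (1 - γ/2)
  obtain ⟨T₁, hT₁1, hT₁⟩ := hA ((1 - γ / 2) / 2) (by linarith)
  set N₀ : ℕ := ⌈T₁⌉₊ with hN₀def
  have hFle : ∀ R : ℝ, 1 ≤ R → F R ≤ (N₀:ℝ) + R ^ (1 - γ / 2) / 2 := by
    intro R hR
    rw [hF]
    set n : ℕ := ⌊R⌋₊ with hndef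
    have hterm : ∀ k ∈ Finset.Icc 1 n, f k ≤
        (if k ≤ N₀ then (1:ℝ) else 0) + ((1 - γ / 2) / 2) * (k:ℝ) ^ (-(γ / 2)) := by
      intro k hk
      have hk1 : 1 ≤ k := (Finset.mem_Icc.mp hk).1
      have hk1' : (1:ℝ) ≤ (k:ℝ) := by exact_mod_cast hk1
      by_cases hkN : k ≤ N₀
      · rw [if_pos hkN]
        have h1 := (hpos (k:ℝ) hk1').2
        have h2 : (0:ℝ) ≤ ((1 - γ / 2) / 2) * (k:ℝ) ^ (-(γ / 2)) := by positivity
        linarith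
      · rw [if_neg hkN, zero_add]
        have hkT : T₁ ≤ (k:ℝ) := by
          have hlt : N₀ < k := not_le.mp hkN
          have h1 : (N₀:ℝ) + 1 ≤ (k:ℝ) := by exact_mod_cast hlt
          have h2 : T₁ ≤ (N₀:ℝ) := Nat.le_ceil T₁
          linarith
        have hb := hT₁ (k:ℝ) hkT
        have hkpow : (0:ℝ) < (k:ℝ) ^ (γ / 2) := Real.rpow_pos_of_pos (by linarith) _
        have hneg : (k:ℝ) ^ (-(γ / 2)) = ((k:ℝ) ^ (γ / 2))⁻¹ :=
          Real.rpow_neg (by linarith) _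
        rw [hneg, ← div_eq_mul_inv, le_div_iff₀ hkpow]
        exact hb
    have h1 : (∑ k ∈ Finset.Icc 1 n, if k ≤ N₀ then (1:ℝ) else 0) ≤ (N₀:ℝ) := by
      rw [Finset.sum_boole]
      have hsub : (Finset.Icc 1 n).filter (· ≤ N₀) ⊆ Finset.Icc 1 N₀ := by
        intro k hk
        rw [Finset.mem_filter, Finset.mem_Icc] at hk
        rw [Finset.mem_Icc]
        exact ⟨hk.1.1, hk.2⟩
      have := Finset.card_le_card hsub
      rw [Nat.card_Icc] at this
      exact_mod_cast le_trans (Nat.cast_le.mpr this) (by norm_num)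
    have h2 : ∑ k ∈ Finset.Icc 1 n, (k:ℝ) ^ (-(γ / 2))
        ≤ (n:ℝ) ^ (1 - γ / 2) / (1 - γ / 2) :=
      aux_sum_rpow (γ / 2) (by linarith) (by linarith) n
    have hn : (n:ℝ) ≤ R := Nat.floor_le (by linarith)
    have h3 : (n:ℝ) ^ (1 - γ / 2) ≤ R ^ (1 - γ / 2) :=
      Real.rpow_le_rpow (Nat.cast_nonneg n) hn hp0.le
    calc ∑ k ∈ Finset.Icc 1 n, f k
        ≤ ∑ k ∈ Finset.Icc 1 n,
          ((if k ≤ N₀ then (1:ℝ) else 0) + ((1 - γ / 2) / 2) * (k:ℝ) ^ (-(γ / 2))) :=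
          Finset.sum_le_sum hterm
      _ = (∑ k ∈ Finset.Icc 1 n, if k ≤ N₀ then (1:ℝ) else 0)
          + ((1 - γ / 2) / 2) * ∑ k ∈ Finset.Icc 1 n, (k:ℝ) ^ (-(γ / 2)) := by
          rw [Finset.sum_add_distrib, Finset.mul_sum]
      _ ≤ (N₀:ℝ) + ((1 - γ / 2) / 2) * ((n:ℝ) ^ (1 - γ / 2) / (1 - γ / 2)) := by
          have hε0 : (0:ℝ) ≤ (1 - γ / 2) / 2 := by linarith
          exact add_le_add h1 (mul_le_mul_of_nonneg_left h2 hε0)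
      _ ≤ (N₀:ℝ) + R ^ (1 - γ / 2) / 2 := by
          have heq : ∀ X : ℝ, ((1 - γ / 2) / 2) * (X / (1 - γ / 2)) = X / 2 := by
            intro X
            field_simp
            linear_combination X * mul_inv_cancel₀ (show (2 - γ) ≠ 0 by linarith)
          rw [heq]
          linarith
  have hB : ∀ᶠ R : ℝ in Filter.atTop, F R < R ^ (1 - γ / 2) := by
    filter_upwards [(tendsto_rpow_atTop hp0).eventually_gt_atTop (2 * (N₀:ℝ) + 1),
      eventually_ge_atTop (1:ℝ)] with R hR2 hR1
    have := hFle R hR1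
    linarith
  -- Final assembly
  obtain ⟨R₀, hR₀⟩ := Filter.eventually_atTop.mp hB
  have hα : (0:ℝ) < 1 / (1 - γ / 2) := by positivity
  filter_upwards [(tendsto_rpow_atTop hα).eventually_ge_atTop R₀,
    eventually_ge_atTop (1:ℝ)] with s hsR hs1
  rw [hFinv]
  obtain ⟨x, hx⟩ := hub s
  have hne : Set.Nonempty {y : ℝ | s ≤ F y} := ⟨x, hx⟩
  apply le_csInf hne
  intro b hb
  have hb' : s ≤ F b := hb
  by_contra hcon
  push_neg at hcon
  have h1 : F b ≤ F (s ^ (1 / (1 - γ / 2))) := hFmono _ _ hcon.le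
  have h2 : F (s ^ (1 / (1 - γ / 2))) < (s ^ (1 / (1 - γ / 2))) ^ (1 - γ / 2) :=
    hR₀ _ hsR
  have h3 : (s ^ (1 / (1 - γ / 2))) ^ (1 - γ / 2) = s := by
    rw [← Real.rpow_mul (by linarith : (0:ℝ) ≤ s)]
    have he : (1 / (1 - γ / 2)) * (1 - γ / 2) = 1 := one_div_mul_cancel hp0.ne'
    rw [he, Real.rpow_one]
  linarith
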